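/- Let θ_Γ, θ_c > 0, 0 < d, and (1-d)·θ_c < θ_Γ < θ_c. Set d* = 1 - θ_Γ/θ_c, so 0 < d* < d. Then a measurable function χ_∞ : Ω → [0,1] (Ω ⊂ ℝ³ bounded with |Ω| > 0) satisfies θ_Γ/θ_c - 1 + (d/|Ω|)·∫_Ω(1-χ_∞(x'))dx' ∈ ∂I(χ_∞(x)) for a.e. x if and only if (1/|Ω|)·∫_Ω(1-χ_∞(x'))dx' = d*/d. -/

import Mathlib

open MeasureTheory Set

/-- The subdifferential of the indicator function of `[0,1] ⊂ ℝ` at `χ ∈ [0,1]`. -/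
def subI (χ : ℝ) : Set ℝ := {η | ∀ y ∈ Icc (0:ℝ) 1, η * (y - χ) ≤ 0}

/-- for intermediate temperatures `(1-d)θ_c < θ_Γ < θ_c`, with
`d* = 1 - θ_Γ/θ_c ∈ (0,d)`, a phase distribution `χ_∞` with values in `[0,1]`
is an equilibrium iff `(1/|Ω|) ∫_Ω (1-χ_∞) = d*/d`. -/
theorem stmt13 (Ω : Set (Fin 3 → ℝ)) (hΩmeas : MeasurableSet Ω)
    (hΩbdd : Bornology.IsBounded Ω)
    (hΩpos : 0 < volume Ω)
    (θΓ θc d : ℝ) (hθΓ : 0 < θΓ) (hθc : 0 < θc) (hd : 0 < d)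
    (hlow : (1 - d) * θc < θΓ) (hhigh : θΓ < θc)
    (χ : (Fin 3 → ℝ) → ℝ) (hχmeas : Measurable χ)
    (hχrange : ∀ᵐ x ∂(volume.restrict Ω), χ x ∈ Icc (0:ℝ) 1) :
    (∀ᵐ x ∂(volume.restrict Ω),
        θΓ / θc - 1 + (d / (volume Ω).toReal) * (∫ x' in Ω, (1 - χ x')) ∈
          subI (χ x)) ↔
      (1 / (volume Ω).toReal) * (∫ x' in Ω, (1 - χ x')) = (1 - θΓ / θc) / d := by
  have hfin : volume Ω < ⊤ := hΩbdd.measure_lt_top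
  have hV : 0 < (volume Ω).toReal := ENNReal.toReal_pos hΩpos.ne' hfin.ne
  set V := (volume Ω).toReal with hVdef
  set I := ∫ x' in Ω, (1 - χ x') with hI
  set c := θΓ / θc - 1 + (d / V) * I with hc
  have hratio : θΓ / θc < 1 := (div_lt_one hθc).2 hhigh
  have hratio' : 1 - d < θΓ / θc := (lt_div_iff₀ hθc).2 (by linarith)
  constructor
  · intro h
    -- show c = 0
    have hc0 : c = 0 := by
      rcases lt_trichotomy c 0 with hneg | h0 | hpos
      · -- forces χ = 0 a.e., hence I = V, hence c > 0
        have hzero : ∀ᵐ x ∂(volume.restrict Ω), χ x = 0 := by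
          filter_upwards [h, hχrange] with x hx hxr
          have := hx 0 ⟨le_refl 0, zero_le_one⟩
          nlinarith [hxr.1, hxr.2]
        have hIV : I = V := by
          rw [hI]
          have : ∫ x' in Ω, (1 - χ x') = ∫ _x' in Ω, (1:ℝ) :=
            integral_congr_ae (by filter_upwards [hzero] with x hx; rw [hx, sub_zero])
          rw [this, setIntegral_const, smul_eq_mul, mul_one]
          rfl
        exfalso
        rw [hc, hIV, div_mul_cancel₀ _ hV.ne'] at hneg
        linarith
      · exact h0
      · -- forces χ = 1 a.e., hence I = 0, hence c < 0
        have hone : ∀ᵐ x ∂(volume.restrict Ω), χ x = 1 := by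
          filter_upwards [h, hχrange] with x hx hxr
          have := hx 1 ⟨zero_le_one, le_refl 1⟩
          nlinarith [hxr.1, hxr.2]
        have hI0 : I = 0 := by
          rw [hI]
          have : ∫ x' in Ω, (1 - χ x') = ∫ _x' in Ω, (0:ℝ) :=
            integral_congr_ae (by filter_upwards [hone] with x hx; rw [hx, sub_self])
          rw [this, integral_zero]
        exfalso
        rw [hc, hI0, mul_zero] at hpos
        linarith
    -- from c = 0 derive the mean-field identity
    rw [hc] at hc0
    have hdI : (d / V) * I = 1 - θΓ / θc := by linarith
    field_simp at hdI ⊢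
    nlinarith [hdI]
  · intro h
    have hc0 : c = 0 := by
      rw [hc]
      have : I = V * ((1 - θΓ / θc) / d) := by
        field_simp at h
        field_simp
        linear_combination h
      rw [this]
      field_simp
      ring
    filter_upwards with x
    intro y _
    show c * (y - χ x) ≤ 0
    simp [hc0]
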